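/- For every a > 0 and b ∈ (0,1) there exists a closed interval I ⊂ (0,1) such that f_{a,b}(I) ⊆ I and for every x ∈ (0,1) there exists n ≥ 0 with f_{a,b}^n(x) ∈ I. -/

import Mathlib

/-- The map `f_{a,b}(x) = x / (x + (1-x) * exp (a (x - b)))`. -/
noncomputable def chaosMap (a b : ℝ) : ℝ → ℝ :=
  fun x => x / (x + (1 - x) * Real.exp (a * (x - b)))

/-- logistic sigmoid -/
noncomputable def sigm (y : ℝ) : ℝ := Real.exp y / (1 + Real.exp y)

noncomputable def Fmap (a b : ℝ) (y : ℝ) : ℝ := y - a * (sigm y - b)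

lemma one_add_exp_pos (y : ℝ) : 0 < 1 + Real.exp y := by positivity

lemma sigm_pos (y : ℝ) : 0 < sigm y :=
  div_pos (Real.exp_pos y) (one_add_exp_pos y)

lemma sigm_lt_one (y : ℝ) : sigm y < 1 := by
  unfold sigm
  rw [div_lt_one (one_add_exp_pos y)]
  linarith

lemma sigm_strictMono : StrictMono sigm := by
  intro y1 y2 h
  unfold sigm
  rw [div_lt_div_iff₀ (one_add_exp_pos y1) (one_add_exp_pos y2)]
  have := Real.exp_lt_exp.mpr h
  nlinarith [Real.exp_pos y1, Real.exp_pos y2]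

lemma sigm_logit {x : ℝ} (h0 : 0 < x) (h1 : x < 1) :
    sigm (Real.log (x / (1 - x))) = x := by
  have hx : 0 < x / (1 - x) := div_pos h0 (by linarith)
  have h2 : (1:ℝ) - x ≠ 0 := by linarith
  have h3 : 1 + x / (1 - x) = 1 / (1 - x) := by field_simp; ring
  unfold sigm
  rw [Real.exp_log hx, h3]
  rw [div_div_div_eq]
  field_simp

lemma conj (a b y : ℝ) : chaosMap a b (sigm y) = sigm (Fmap a b y) := by
  have hE : 0 < Real.exp y := Real.exp_pos y
  have h1E : 0 < 1 + Real.exp y := one_add_exp_pos y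
  have hT : 0 < Real.exp (a * (sigm y - b)) := Real.exp_pos _
  unfold chaosMap Fmap sigm
  rw [Real.exp_sub]
  set E := Real.exp y with hEdef
  set T := Real.exp (a * (E / (1 + E) - b)) with hTdef
  have hET : 0 < E + T := by unfold E T at *; positivity
  have key : E / (1 + E) + (1 - E / (1 + E)) * T = (E + T) / (1 + E) := by
    field_simp
    rw [add_sub_cancel_right, one_mul]
  rw [key]
  rw [div_div_div_eq]
  have hTne : T ≠ 0 := ne_of_gt hT
  have h1Ene : (1:ℝ) + E ≠ 0 := ne_of_gt h1E
  have hETne : E + T ≠ 0 := ne_of_gt hET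
  field_simp
  rw [add_comm T E, div_self hETne]

lemma conj_iter (a b : ℝ) (n : ℕ) (y : ℝ) :
    (chaosMap a b)^[n] (sigm y) = sigm ((Fmap a b)^[n] y) := by
  induction n generalizing y with
  | zero => simp
  | succ n ih =>
    rw [Function.iterate_succ_apply, Function.iterate_succ_apply, conj, ih]

lemma enter_all (a b s : ℝ) (ha : 0 < a) (hb0 : 0 < b) (hb1 : b < 1)
    (hs : sigm s = b) :
    ∀ y : ℝ, ∃ n : ℕ, (Fmap a b)^[n] y ∈ Set.Icc (s - a) (s + a) := by
  have hδ : 0 < a * (sigm (s + a) - b) := by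
    have := sigm_strictMono (show s < s + a by linarith)
    rw [hs] at this
    nlinarith
  have hδ' : 0 < a * (b - sigm (s - a)) := by
    have := sigm_strictMono (show s - a < s by linarith)
    rw [hs] at this
    nlinarith
  set δ := a * (sigm (s + a) - b) with hδdef
  set δ' := a * (b - sigm (s - a)) with hδ'def
  have A : ∀ k : ℕ, ∀ y : ℝ, s - a ≤ y → y ≤ s + a + k * δ →
      ∃ n : ℕ, (Fmap a b)^[n] y ∈ Set.Icc (s - a) (s + a) := by
    intro k
    induction k with
    | zero =>
      intro y h1 h2
      exact ⟨0, by constructor <;> [exact h1; simpa using h2]⟩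
    | succ k ih =>
      intro y h1 h2
      by_cases hy : y ≤ s + a
      · exact ⟨0, h1, hy⟩
      · push_neg at hy
        have hσ : sigm (s + a) < sigm y := sigm_strictMono hy
        have hF1 : Fmap a b y ≤ s + a + k * δ := by
          unfold Fmap
          push_cast at h2
          nlinarith
        have hF2 : s - a ≤ Fmap a b y := by
          have h1' : sigm y < 1 := sigm_lt_one y
          unfold Fmap
          nlinarith
        obtain ⟨n, hn⟩ := ih (Fmap a b y) hF2 hF1
        exact ⟨n + 1, by rwa [Function.iterate_succ_apply]⟩
  have B : ∀ k : ℕ, ∀ y : ℝ, y ≤ s + a → s - a - k * δ' ≤ y →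
      ∃ n : ℕ, (Fmap a b)^[n] y ∈ Set.Icc (s - a) (s + a) := by
    intro k
    induction k with
    | zero =>
      intro y h1 h2
      exact ⟨0, by simpa using h2, h1⟩
    | succ k ih =>
      intro y h1 h2
      by_cases hy : s - a ≤ y
      · exact ⟨0, hy, h1⟩
      · push_neg at hy
        have hσ : sigm y < sigm (s - a) := sigm_strictMono hy
        have hF1 : s - a - k * δ' ≤ Fmap a b y := by
          unfold Fmap
          push_cast at h2
          nlinarith
        have hF2 : Fmap a b y ≤ s + a := by
          have h0' : 0 < sigm y := sigm_pos y
          unfold Fmap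
          nlinarith
        obtain ⟨n, hn⟩ := ih (Fmap a b y) hF2 hF1
        exact ⟨n + 1, by rwa [Function.iterate_succ_apply]⟩
  intro y
  rcases le_total y (s + a) with h | h
  · obtain ⟨k, hk⟩ := exists_nat_ge ((s - a - y) / δ')
    have : s - a - k * δ' ≤ y := by
      rw [div_le_iff₀ hδ'] at hk
      linarith
    exact B k y h this
  · obtain ⟨k, hk⟩ := exists_nat_ge ((y - (s + a)) / δ)
    have : y ≤ s + a + k * δ := by
      rw [div_le_iff₀ hδ] at hk
      linarith
    exact A k y (by linarith) this

lemma Finv (a b s : ℝ) (ha : 0 < a) (hb0 : 0 < b) (hb1 : b < 1)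
    (hs : sigm s = b) {y : ℝ} (hy : y ∈ Set.Icc (s - a) (s + a)) :
    Fmap a b y ∈ Set.Icc (s - a) (s + a) := by
  obtain ⟨h1, h2⟩ := hy
  have h0' : 0 < sigm y := sigm_pos y
  have h1' : sigm y < 1 := sigm_lt_one y
  rcases le_total y s with h | h
  · have : sigm y ≤ sigm s := sigm_strictMono.monotone h
    rw [hs] at this
    constructor <;> (unfold Fmap; nlinarith)
  · have : sigm s ≤ sigm y := sigm_strictMono.monotone h
    rw [hs] at this
    constructor <;> (unfold Fmap; nlinarith)

/-- For every `a > 0` and `b ∈ (0,1)` there exists a closed interval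
`I = [c,d] ⊂ (0,1)` such that `f_{a,b}(I) ⊆ I` and the trajectory of every
point of `(0,1)` enters `I`. -/
theorem stmt_0 (a b : ℝ) (ha : 0 < a) (hb : b ∈ Set.Ioo (0 : ℝ) 1) :
    ∃ c d : ℝ, 0 < c ∧ c ≤ d ∧ d < 1 ∧
      Set.MapsTo (chaosMap a b) (Set.Icc c d) (Set.Icc c d) ∧
      ∀ x ∈ Set.Ioo (0 : ℝ) 1, ∃ n : ℕ, (chaosMap a b)^[n] x ∈ Set.Icc c d := by
  obtain ⟨hb0, hb1⟩ := hb
  set s := Real.log (b / (1 - b)) with hsdef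
  have hs : sigm s = b := sigm_logit hb0 hb1
  refine ⟨sigm (s - a), sigm (s + a), sigm_pos _, ?_, sigm_lt_one _, ?_, ?_⟩
  · exact (sigm_strictMono.monotone (by linarith))
  · intro x hx
    obtain ⟨hxc, hxd⟩ := hx
    have hx0 : 0 < x := lt_of_lt_of_le (sigm_pos _) hxc
    have hx1 : x < 1 := lt_of_le_of_lt hxd (sigm_lt_one _)
    set y := Real.log (x / (1 - x)) with hydef
    have hxy : sigm y = x := sigm_logit hx0 hx1
    have hyI : y ∈ Set.Icc (s - a) (s + a) := by
      constructor
      · exact sigm_strictMono.le_iff_le.mp (by rw [hxy]; exact hxc)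
      · exact sigm_strictMono.le_iff_le.mp (by rw [hxy]; exact hxd)
    have hF := Finv a b s ha hb0 hb1 hs hyI
    rw [← hxy, conj]
    exact ⟨sigm_strictMono.monotone hF.1, sigm_strictMono.monotone hF.2⟩
  · intro x hx
    obtain ⟨hx0, hx1⟩ := hx
    set y := Real.log (x / (1 - x)) with hydef
    have hxy : sigm y = x := sigm_logit hx0 hx1
    obtain ⟨n, hn⟩ := enter_all a b s ha hb0 hb1 hs y
    refine ⟨n, ?_⟩
    rw [← hxy, conj_iter]
    exact ⟨sigm_strictMono.monotone hn.1, sigm_strictMono.monotone hn.2⟩
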